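/- For every integer n ≥ 0, every integer r ≥ 1 and every real number x, Σ_{k=0}^{n} S_{J,λ}^{(2)}(n,k)·C_k^{(r)}(x) = Σ_{k=0}^{n} binom(n,k)·(Σ_{l=0}^{k} E_{l,λ}^{(r)}·S_{2,λ}(k,l))·B_{n−k,λ}(x), where binom(n,k) is the ordinary binomial coefficient. -/

import Mathlib

open Finset PowerSeries

/-- degenerate falling factorial `(x)_{n,λ}`; `dff 1 x n` is the ordinary falling factorial. -/
noncomputable def dff (lam x : ℝ) (n : ℕ) : ℝ := ∏ i ∈ Finset.range n, (x - (i : ℝ) * lam)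

/-- `(1)_{n,1/λ} = ∏_{i<n} (1 - i/λ)`. -/
noncomputable def oneFall (lam : ℝ) (n : ℕ) : ℝ := ∏ i ∈ Finset.range n, (1 - (i : ℝ) / lam)

/-- degenerate exponential `e_λ^x(t)` as a formal power series. -/
noncomputable def degExp (lam x : ℝ) : PowerSeries ℝ :=
  PowerSeries.mk fun n => dff lam x n / n.factorial

/-- `(1+t)^y = Σ_{n≥0} (y)_n t^n/n!`. -/
noncomputable def onePlus (y : ℝ) : PowerSeries ℝ :=
  PowerSeries.mk fun n => dff 1 y n / n.factorial

/-- `(1-t)^y = Σ_{n≥0} (y)_n (-1)^n t^n/n!`. -/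
noncomputable def oneMinus (y : ℝ) : PowerSeries ℝ :=
  PowerSeries.mk fun n => dff 1 y n * (-1) ^ n / n.factorial

/-- `log_λ(1+t) = Σ_{n≥1} λ^{n-1} (1)_{n,1/λ} t^n/n!`. -/
noncomputable def degLog (lam : ℝ) : PowerSeries ℝ :=
  PowerSeries.mk fun n => if n = 0 then 0 else lam ^ (n - 1) * oneFall lam n / n.factorial

/-- `log_λ(1-t) = Σ_{n≥1} λ^{n-1} (1)_{n,1/λ} (-1)^n t^n/n!`. -/
noncomputable def degLogNeg (lam : ℝ) : PowerSeries ℝ :=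
  PowerSeries.mk fun n =>
    if n = 0 then 0 else lam ^ (n - 1) * oneFall lam n * (-1) ^ n / n.factorial

/-- composition `f(g(t))` of formal power series (the usual composition when the
constant term of `g` is zero). -/
noncomputable def pcomp (f g : PowerSeries ℝ) : PowerSeries ℝ :=
  PowerSeries.mk fun n =>
    ∑ k ∈ Finset.range (n + 1), (PowerSeries.coeff k f) * (PowerSeries.coeff n (g ^ k))

/-! ### auxiliary lemmas -/


lemma dff_zero (lam x : ℝ) : dff lam x 0 = 1 := by simp [dff]

lemma dff_succ (lam x : ℝ) (n : ℕ) :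
    dff lam x (n + 1) = dff lam x n * (x - n * lam) := Finset.prod_range_succ _ _

lemma dff_scale (lam x : ℝ) (hlam : lam ≠ 0) (n : ℕ) :
    dff lam x n = lam ^ n * dff 1 (x / lam) n := by
  induction n with
  | zero => simp [dff]
  | succ n ih =>
      rw [dff_succ, dff_succ, ih, pow_succ]
      field_simp

lemma dff_one_nat (m n : ℕ) : dff 1 (m : ℝ) n = (m.descFactorial n : ℝ) := by
  induction n with
  | zero => simp [dff]
  | succ n ih =>
      rw [dff_succ, ih, Nat.descFactorial_succ]
      by_cases h : n ≤ m
      · push_cast [Nat.cast_sub h]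
        ring
      · rw [Nat.descFactorial_eq_zero_iff_lt.2 (by omega)]
        simp

lemma dff_one_nat_div (m n : ℕ) :
    dff 1 (m : ℝ) n / (n.factorial : ℝ) = (m.choose n : ℝ) := by
  rw [dff_one_nat, Nat.descFactorial_eq_factorial_mul_choose]
  push_cast
  rw [mul_comm, mul_div_assoc, div_self (by positivity), mul_one]

/-! ### polynomial function machinery -/

def IsPolyFun (f : ℝ → ℝ) : Prop := ∃ P : Polynomial ℝ, ∀ y, f y = P.eval y

lemma IsPolyFun.const (a : ℝ) : IsPolyFun (fun _ => a) := ⟨Polynomial.C a, by simp⟩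

lemma IsPolyFun.sum {ι : Type*} (s : Finset ι) (f : ι → ℝ → ℝ)
    (h : ∀ i ∈ s, IsPolyFun (f i)) : IsPolyFun (fun y => ∑ i ∈ s, f i y) := by
  classical
  induction s using Finset.induction_on with
  | empty => exact ⟨0, by simp⟩
  | insert a s hx ih =>
      obtain ⟨P, hP⟩ := h a (Finset.mem_insert_self _ _)
      obtain ⟨Q, hQ⟩ := ih (fun i hi => h i (Finset.mem_insert_of_mem hi))
      exact ⟨P + Q, fun y => by simp [Finset.sum_insert hx, hP, hQ]⟩

lemma IsPolyFun.const_mul {f : ℝ → ℝ} (a : ℝ) (h : IsPolyFun f) :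
    IsPolyFun (fun y => a * f y) := by
  obtain ⟨P, hP⟩ := h
  exact ⟨Polynomial.C a * P, fun y => by simp [hP]⟩

lemma IsPolyFun.mul_const {f : ℝ → ℝ} (a : ℝ) (h : IsPolyFun f) :
    IsPolyFun (fun y => f y * a) := by
  obtain ⟨P, hP⟩ := h
  exact ⟨P * Polynomial.C a, fun y => by simp [hP]⟩

lemma isPolyFun_dff_shift (mu c : ℝ) (n : ℕ) : IsPolyFun (fun y => dff mu (c + y) n) := by
  refine ⟨∏ i ∈ Finset.range n, (Polynomial.X - Polynomial.C ((i : ℝ) * mu - c)), fun y => ?_⟩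
  rw [Polynomial.eval_prod]
  refine Finset.prod_congr rfl fun i _ => ?_
  simp
  ring

lemma isPolyFun_dff (mu : ℝ) (n : ℕ) : IsPolyFun (fun y => dff mu y n) := by
  simpa using isPolyFun_dff_shift mu 0 n

lemma eq_on_real_of_eq_on_nat {f g : ℝ → ℝ} (hf : IsPolyFun f) (hg : IsPolyFun g)
    (h : ∀ m : ℕ, f m = g m) : ∀ y, f y = g y := by
  obtain ⟨P, hP⟩ := hf
  obtain ⟨Q, hQ⟩ := hg
  have hPQ : P = Q := by
    apply Polynomial.eq_of_infinite_eval_eq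
    apply Set.Infinite.mono (s := Set.range ((↑) : ℕ → ℝ))
    · rintro x ⟨m, rfl⟩
      simp only [Set.mem_setOf_eq, ← hP, ← hQ]
      exact h m
    · exact Set.infinite_range_of_injective Nat.cast_injective
  intro y
  rw [hP, hQ, hPQ]

/-! ### Vandermonde -/

lemma vdm_nat (p q n : ℕ) :
    dff 1 ((p : ℝ) + q) n
      = ∑ k ∈ Finset.range (n + 1), (n.choose k : ℝ) * dff 1 p k * dff 1 q (n - k) := by
  have : ((p : ℝ) + q) = ((p + q : ℕ) : ℝ) := by push_cast; ring
  rw [this, dff_one_nat]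
  rw [Nat.descFactorial_eq_factorial_mul_choose, Nat.add_choose_eq p q n,
    Finset.Nat.sum_antidiagonal_eq_sum_range_succ_mk]
  push_cast [Finset.mul_sum]
  refine Finset.sum_congr rfl fun k hk => ?_
  have hk' : k ≤ n := Nat.lt_succ_iff.1 (Finset.mem_range.1 hk)
  rw [dff_one_nat, dff_one_nat, Nat.descFactorial_eq_factorial_mul_choose,
    Nat.descFactorial_eq_factorial_mul_choose]
  have : (n.factorial : ℝ) = (n.choose k : ℝ) * k.factorial * (n - k).factorial := by
    rw [← Nat.choose_mul_factorial_mul_factorial hk']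
    push_cast
    ring
  rw [this]
  push_cast
  ring

lemma vdm_one (a b : ℝ) (n : ℕ) :
    dff 1 (a + b) n
      = ∑ k ∈ Finset.range (n + 1), (n.choose k : ℝ) * dff 1 a k * dff 1 b (n - k) := by
  -- first extend in the first variable with b a natural number
  have step1 : ∀ (q : ℕ) (a : ℝ), dff 1 (a + q) n
      = ∑ k ∈ Finset.range (n + 1), (n.choose k : ℝ) * dff 1 a k * dff 1 (q : ℝ) (n - k) := by
    intro q
    apply eq_on_real_of_eq_on_nat
    · simpa [add_comm] using isPolyFun_dff_shift 1 (q : ℝ) n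
    · apply IsPolyFun.sum
      intro k _
      exact ((isPolyFun_dff 1 k).const_mul _).mul_const _
    · intro m
      exact vdm_nat m q n
  -- then extend in the second variable
  apply eq_on_real_of_eq_on_nat (f := fun b => dff 1 (a + b) n)
    (g := fun b => ∑ k ∈ Finset.range (n + 1), (n.choose k : ℝ) * dff 1 a k * dff 1 b (n - k))
  · exact isPolyFun_dff_shift 1 a n
  · apply IsPolyFun.sum
    intro k _
    simpa [mul_assoc] using ((isPolyFun_dff 1 (n - k)).const_mul ((n.choose k : ℝ) * dff 1 a k))
  · intro m
    exact step1 m a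

lemma dff_add (lam : ℝ) (hlam : lam ≠ 0) (a b : ℝ) (n : ℕ) :
    dff lam (a + b) n
      = ∑ k ∈ Finset.range (n + 1), (n.choose k : ℝ) * dff lam a k * dff lam b (n - k) := by
  rw [dff_scale lam (a + b) hlam, add_div, vdm_one, Finset.mul_sum]
  refine Finset.sum_congr rfl fun k hk => ?_
  have hk' : k ≤ n := Nat.lt_succ_iff.1 (Finset.mem_range.1 hk)
  rw [dff_scale lam a hlam k, dff_scale lam b hlam (n - k)]
  have : lam ^ n = lam ^ k * lam ^ (n - k) := by
    rw [← pow_add, Nat.add_sub_cancel' hk']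
  rw [this]
  ring



lemma coeff_degExp (lam x : ℝ) (n : ℕ) :
    PowerSeries.coeff n (degExp lam x) = dff lam x n / n.factorial := by
  simp [degExp]

lemma degExp_mul (lam : ℝ) (hlam : lam ≠ 0) (a b : ℝ) :
    degExp lam a * degExp lam b = degExp lam (a + b) := by
  ext n
  rw [PowerSeries.coeff_mul, Finset.Nat.sum_antidiagonal_eq_sum_range_succ_mk, coeff_degExp,
    dff_add lam hlam a b n, Finset.sum_div]
  refine Finset.sum_congr rfl fun k hk => ?_
  have hk' : k ≤ n := Nat.lt_succ_iff.1 (Finset.mem_range.1 hk)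
  rw [coeff_degExp, coeff_degExp]
  have hfac : (n.factorial : ℝ) = (n.choose k : ℝ) * k.factorial * (n - k).factorial := by
    rw [← Nat.choose_mul_factorial_mul_factorial hk']
    push_cast
    ring
  have h1 : (k.factorial : ℝ) ≠ 0 := by positivity
  have h2 : ((n - k).factorial : ℝ) ≠ 0 := by positivity
  have h3 : (n.factorial : ℝ) ≠ 0 := by positivity
  field_simp
  rw [hfac]
  ring

lemma degExp_zero (lam : ℝ) : degExp lam 0 = 1 := by
  ext n
  rw [coeff_degExp]
  cases n with
  | zero => simp [dff]
  | succ n =>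
      rw [PowerSeries.coeff_one]
      simp only [Nat.succ_ne_zero, if_false]
      have : dff lam 0 (n + 1) = 0 :=
        Finset.prod_eq_zero (Finset.mem_range.2 (Nat.succ_pos n)) (by simp)
      rw [this, zero_div]

lemma constantCoeff_degExp (lam x : ℝ) :
    PowerSeries.constantCoeff (degExp lam x) = 1 := by
  rw [← PowerSeries.coeff_zero_eq_constantCoeff, coeff_degExp]
  simp [dff]

lemma degExp_pow (lam : ℝ) (hlam : lam ≠ 0) (m : ℕ) :
    (degExp lam 1) ^ m = degExp lam (m : ℝ) := by
  induction m with
  | zero => simpa using (degExp_zero lam).symm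
  | succ m ih =>
      rw [pow_succ, ih, degExp_mul lam hlam]
      push_cast
      ring_nf

/-! ### pcomp lemmas -/

lemma coeff_pcomp (f g : PowerSeries ℝ) (n : ℕ) :
    PowerSeries.coeff n (pcomp f g)
      = ∑ k ∈ Finset.range (n + 1),
          (PowerSeries.coeff k f) * (PowerSeries.coeff n (g ^ k)) := by
  simp [pcomp]

lemma coeff_pow_eq_zero {g : PowerSeries ℝ} (hg : PowerSeries.constantCoeff g = 0) :
    ∀ (k n : ℕ), n < k → PowerSeries.coeff n (g ^ k) = 0 := by
  intro k
  induction k with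
  | zero => omega
  | succ k ih =>
      intro n hn
      rw [pow_succ, PowerSeries.coeff_mul]
      refine Finset.sum_eq_zero fun p hp => ?_
      rw [Finset.HasAntidiagonal.mem_antidiagonal] at hp
      by_cases h2 : p.2 = 0
      · rw [h2, PowerSeries.coeff_zero_eq_constantCoeff, hg, mul_zero]
      · have : p.1 < k := by omega
        rw [ih p.1 this, zero_mul]

lemma coeff_pcomp_ext {g : PowerSeries ℝ} (hg : PowerSeries.constantCoeff g = 0)
    (f : PowerSeries ℝ) {n N : ℕ} (hN : n ≤ N) :
    PowerSeries.coeff n (pcomp f g)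
      = ∑ k ∈ Finset.range (N + 1),
          (PowerSeries.coeff k f) * (PowerSeries.coeff n (g ^ k)) := by
  rw [coeff_pcomp]
  apply Finset.sum_subset
  · exact Finset.range_subset_range.2 (by omega)
  · intro k _ hk
    rw [Finset.mem_range, not_lt] at hk
    rw [coeff_pow_eq_zero hg k n (by omega), mul_zero]

lemma pcomp_one {g : PowerSeries ℝ} : pcomp 1 g = 1 := by
  ext n
  rw [coeff_pcomp]
  rw [Finset.sum_eq_single 0]
  · simp
  · intro k _ hk
    rw [PowerSeries.coeff_one, if_neg hk, zero_mul]
  · intro h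
    exact absurd (Finset.mem_range.2 (Nat.succ_pos n)) h

lemma pcomp_C (a : ℝ) (g : PowerSeries ℝ) : pcomp (PowerSeries.C a) g = PowerSeries.C a := by
  ext n
  rw [coeff_pcomp]
  rw [Finset.sum_eq_single 0]
  · simp [PowerSeries.coeff_C]
  · intro k _ hk
    rw [PowerSeries.coeff_C, if_neg hk, zero_mul]
  · intro h
    exact absurd (Finset.mem_range.2 (Nat.succ_pos n)) h

lemma pcomp_add (f₁ f₂ g : PowerSeries ℝ) :
    pcomp (f₁ + f₂) g = pcomp f₁ g + pcomp f₂ g := by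
  ext n
  rw [map_add, coeff_pcomp, coeff_pcomp, coeff_pcomp, ← Finset.sum_add_distrib]
  refine Finset.sum_congr rfl fun k _ => ?_
  rw [map_add, add_mul]

lemma pcomp_X {g : PowerSeries ℝ} (hg : PowerSeries.constantCoeff g = 0) :
    pcomp PowerSeries.X g = g := by
  ext n
  rw [coeff_pcomp]
  cases n with
  | zero =>
      rw [← PowerSeries.coeff_zero_eq_constantCoeff] at hg
      simp [hg]
  | succ n =>
      rw [Finset.sum_eq_single 1]
      · simp
      · intro k _ hk
        rw [PowerSeries.coeff_X, if_neg hk, zero_mul]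
      · intro h
        exact absurd (Finset.mem_range.2 (by omega)) h

lemma pcomp_mul {g : PowerSeries ℝ} (hg : PowerSeries.constantCoeff g = 0)
    (f₁ f₂ : PowerSeries ℝ) :
    pcomp (f₁ * f₂) g = pcomp f₁ g * pcomp f₂ g := by
  classical
  ext n
  -- abbreviations
  set c : ℕ → ℝ := fun k => PowerSeries.coeff n (g ^ k) with hc
  -- LHS as a sum over pairs with p.1 + p.2 ≤ n
  have hL : PowerSeries.coeff n (pcomp (f₁ * f₂) g)
      = ∑ k ∈ Finset.range (n + 1), ∑ p ∈ Finset.HasAntidiagonal.antidiagonal k,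
          PowerSeries.coeff p.1 f₁ * PowerSeries.coeff p.2 f₂ * c (p.1 + p.2) := by
    rw [coeff_pcomp]
    refine Finset.sum_congr rfl fun k _ => ?_
    rw [PowerSeries.coeff_mul, Finset.sum_mul]
    refine Finset.sum_congr rfl fun p hp => ?_
    rw [Finset.HasAntidiagonal.mem_antidiagonal] at hp
    rw [hp]
  -- RHS as a sum over the full square
  have hA : ∀ m : ℕ, m ≤ n → PowerSeries.coeff m (pcomp f₁ g)
      = ∑ i ∈ Finset.range (n + 1), PowerSeries.coeff i f₁ * PowerSeries.coeff m (g ^ i) :=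
    fun m hm => coeff_pcomp_ext hg f₁ hm
  have hB : ∀ m : ℕ, m ≤ n → PowerSeries.coeff m (pcomp f₂ g)
      = ∑ j ∈ Finset.range (n + 1), PowerSeries.coeff j f₂ * PowerSeries.coeff m (g ^ j) :=
    fun m hm => coeff_pcomp_ext hg f₂ hm
  have hR : PowerSeries.coeff n (pcomp f₁ g * pcomp f₂ g)
      = ∑ i ∈ Finset.range (n + 1), ∑ j ∈ Finset.range (n + 1),
          PowerSeries.coeff i f₁ * PowerSeries.coeff j f₂ * c (i + j) := by
    rw [PowerSeries.coeff_mul]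
    have : ∀ p ∈ Finset.HasAntidiagonal.antidiagonal n,
        PowerSeries.coeff p.1 (pcomp f₁ g) * PowerSeries.coeff p.2 (pcomp f₂ g)
          = ∑ i ∈ Finset.range (n + 1), ∑ j ∈ Finset.range (n + 1),
              (PowerSeries.coeff i f₁ * PowerSeries.coeff p.1 (g ^ i)) *
              (PowerSeries.coeff j f₂ * PowerSeries.coeff p.2 (g ^ j)) := by
      intro p hp
      rw [Finset.HasAntidiagonal.mem_antidiagonal] at hp
      rw [hA p.1 (by omega), hB p.2 (by omega), Finset.sum_mul_sum]
    rw [Finset.sum_congr rfl this, Finset.sum_comm]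
    refine Finset.sum_congr rfl fun i _ => ?_
    rw [Finset.sum_comm]
    refine Finset.sum_congr rfl fun j _ => ?_
    calc ∑ p ∈ Finset.HasAntidiagonal.antidiagonal n,
          PowerSeries.coeff i f₁ * PowerSeries.coeff p.1 (g ^ i) *
            (PowerSeries.coeff j f₂ * PowerSeries.coeff p.2 (g ^ j))
        = PowerSeries.coeff i f₁ * PowerSeries.coeff j f₂ *
            ∑ p ∈ Finset.HasAntidiagonal.antidiagonal n,
              PowerSeries.coeff p.1 (g ^ i) * PowerSeries.coeff p.2 (g ^ j) := by
          rw [Finset.mul_sum]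
          exact Finset.sum_congr rfl fun p _ => by ring
      _ = PowerSeries.coeff i f₁ * PowerSeries.coeff j f₂ *
            PowerSeries.coeff n (g ^ (i + j)) := by
          rw [← PowerSeries.coeff_mul, ← pow_add]
  -- identify triangle sum with square sum
  rw [hL, hR]
  have hvan : ∀ p : ℕ × ℕ, n < p.1 + p.2 →
      PowerSeries.coeff p.1 f₁ * PowerSeries.coeff p.2 f₂ * c (p.1 + p.2) = 0 := by
    intro p hp
    rw [hc]
    simp only []
    rw [coeff_pow_eq_zero hg _ _ hp, mul_zero]
  have hsq : ∑ i ∈ Finset.range (n + 1), ∑ j ∈ Finset.range (n + 1),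
      PowerSeries.coeff i f₁ * PowerSeries.coeff j f₂ * c (i + j)
      = ∑ p ∈ (Finset.range (n + 1) ×ˢ Finset.range (n + 1)).filter
            (fun p => p.1 + p.2 ≤ n),
          PowerSeries.coeff p.1 f₁ * PowerSeries.coeff p.2 f₂ * c (p.1 + p.2) := by
    rw [← Finset.sum_product']
    symm
    apply Finset.sum_subset (Finset.filter_subset _ _)
    intro p hmem hp
    rw [Finset.mem_filter, not_and] at hp
    have := hp hmem
    exact hvan p (by omega)
  rw [hsq]
  rw [← Finset.sum_fiberwise_of_maps_to (g := fun p : ℕ × ℕ => p.1 + p.2)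
      (t := Finset.range (n + 1))
      (fun p hp => by
        rw [Finset.mem_filter] at hp
        show p.1 + p.2 ∈ Finset.range (n + 1)
        exact Finset.mem_range.2 (by omega))]
  refine Finset.sum_congr rfl fun k hk => ?_
  have hk' : k ≤ n := Nat.lt_succ_iff.1 (Finset.mem_range.1 hk)
  have hset : ((Finset.range (n + 1) ×ˢ Finset.range (n + 1)).filter
        (fun p => p.1 + p.2 ≤ n)).filter (fun p => p.1 + p.2 = k)
      = Finset.HasAntidiagonal.antidiagonal k := by
    ext p
    simp only [Finset.mem_filter, Finset.HasAntidiagonal.mem_antidiagonal, Finset.mem_product,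
      Finset.mem_range]
    constructor
    · rintro ⟨_, h⟩; exact h
    · intro h
      refine ⟨⟨⟨by omega, by omega⟩, by omega⟩, h⟩
  rw [hset]

lemma pcomp_pow {g : PowerSeries ℝ} (hg : PowerSeries.constantCoeff g = 0)
    (f : PowerSeries ℝ) (m : ℕ) : pcomp (f ^ m) g = (pcomp f g) ^ m := by
  induction m with
  | zero => simpa using pcomp_one
  | succ m ih => rw [pow_succ, pcomp_mul hg, ih, pow_succ]

lemma constantCoeff_pcomp (f g : PowerSeries ℝ) :
    PowerSeries.constantCoeff (pcomp f g) = PowerSeries.constantCoeff f := by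
  rw [← PowerSeries.coeff_zero_eq_constantCoeff, coeff_pcomp]
  simp

lemma coeff_onePlus (y : ℝ) (n : ℕ) :
    PowerSeries.coeff n (onePlus y) = dff 1 y n / n.factorial := by simp [onePlus]

lemma onePlus_nat (m : ℕ) : onePlus (m : ℝ) = (1 + PowerSeries.X) ^ m := by
  ext n
  rw [coeff_onePlus, dff_one_nat_div]
  have h1 : (1 + PowerSeries.X : PowerSeries ℝ)
      = ((Polynomial.X + 1 : Polynomial ℝ) : PowerSeries ℝ) := by
    rw [Polynomial.coe_add, Polynomial.coe_X, Polynomial.coe_one, add_comm]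
  rw [h1, ← Polynomial.coe_pow, Polynomial.coeff_coe, Polynomial.coeff_X_add_one_pow]

lemma IsPolyFun.congr {f g : ℝ → ℝ} (h : IsPolyFun f) (hfg : ∀ y, f y = g y) :
    IsPolyFun g := by
  obtain ⟨P, hP⟩ := h
  exact ⟨P, fun y => (hfg y).symm.trans (hP y)⟩

/-- the master lemma: any family `W` of power series which is polynomial in the
parameter coefficientwise and agrees with `(1+u)^m` at natural parameters is the
composition of the binomial series with `u`. -/
lemma keyA {u : PowerSeries ℝ} (hu : PowerSeries.constantCoeff u = 0)
    (W : ℝ → PowerSeries ℝ)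
    (hWpoly : ∀ n, IsPolyFun fun y => PowerSeries.coeff n (W y))
    (hWnat : ∀ m : ℕ, W (m : ℝ) = (1 + u) ^ m) (y : ℝ) :
    pcomp (onePlus y) u = W y := by
  ext n
  refine eq_on_real_of_eq_on_nat (f := fun y => PowerSeries.coeff n (pcomp (onePlus y) u))
    (g := fun y => PowerSeries.coeff n (W y)) ?_ (hWpoly n) ?_ y
  · refine IsPolyFun.congr (f := fun y => ∑ k ∈ Finset.range (n + 1),
      (PowerSeries.coeff n (u ^ k) / k.factorial) * dff 1 y k) ?_ ?_
    · exact IsPolyFun.sum _ _ fun k _ => (isPolyFun_dff 1 k).const_mul _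
    · intro y
      rw [coeff_pcomp]
      refine Finset.sum_congr rfl fun k _ => ?_
      rw [coeff_onePlus]
      ring
  · intro m
    have : pcomp (onePlus (m : ℝ)) u = (1 + u) ^ m := by
      rw [onePlus_nat, pcomp_pow hu, pcomp_add, pcomp_one, pcomp_X hu]
    show PowerSeries.coeff n (pcomp (onePlus (m : ℝ)) u)
        = PowerSeries.coeff n (W (m : ℝ))
    rw [this, hWnat]

/-- instance 1: `(1+t)^y` composed with `e_λ(t) - 1` is `e_λ^y(t)`. -/
lemma comp_onePlus_degExp (lam : ℝ) (hlam : lam ≠ 0) (y : ℝ) :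
    pcomp (onePlus y) (degExp lam 1 - 1) = degExp lam y := by
  have hg0 : PowerSeries.constantCoeff (degExp lam 1 - 1) = 0 := by
    rw [map_sub, constantCoeff_degExp, map_one, sub_self]
  refine keyA hg0 _ (fun n => ?_) (fun m => ?_) y
  · refine IsPolyFun.congr ((isPolyFun_dff lam n).mul_const ((n.factorial : ℝ))⁻¹) ?_
    intro y
    rw [coeff_degExp, div_eq_mul_inv]
  · rw [add_sub_cancel, degExp_pow lam hlam]

/-- instance 2. -/
lemma comp_onePlus_F (lam : ℝ) (hlam : lam ≠ 0) (y : ℝ) :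
    pcomp (onePlus y) (pcomp (degExp lam 1) (degExp lam 1 - 1) - 1)
      = pcomp (degExp lam y) (degExp lam 1 - 1) := by
  have hg0 : PowerSeries.constantCoeff (degExp lam 1 - 1) = 0 := by
    rw [map_sub, constantCoeff_degExp, map_one, sub_self]
  have hh0 : PowerSeries.constantCoeff
      (pcomp (degExp lam 1) (degExp lam 1 - 1) - 1) = 0 := by
    rw [map_sub, constantCoeff_pcomp, constantCoeff_degExp, map_one, sub_self]
  refine keyA hh0 (fun y => pcomp (degExp lam y) (degExp lam 1 - 1))
    (fun n => ?_) (fun m => ?_) y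
  · refine IsPolyFun.congr (f := fun y => ∑ k ∈ Finset.range (n + 1),
      (PowerSeries.coeff n ((degExp lam 1 - 1) ^ k) / k.factorial) * dff lam y k)
      (IsPolyFun.sum _ _ fun k _ => (isPolyFun_dff lam k).const_mul _) ?_
    intro y
    rw [coeff_pcomp]
    refine Finset.sum_congr rfl fun k _ => ?_
    rw [coeff_degExp]
    ring
  · rw [add_sub_cancel, ← pcomp_pow hg0, degExp_pow lam hlam]

/-! ### linear independence of falling factorials -/

noncomputable def dffP (mu : ℝ) (n : ℕ) : Polynomial ℝ :=
  ∏ i ∈ Finset.range n, (Polynomial.X - Polynomial.C ((i : ℝ) * mu))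

lemma dffP_eval (mu y : ℝ) (n : ℕ) : (dffP mu n).eval y = dff mu y n := by
  simp [dffP, dff, Polynomial.eval_prod]

lemma dffP_monic (n : ℕ) : (dffP 1 n).Monic :=
  Polynomial.monic_prod_of_monic _ _ fun i _ => Polynomial.monic_X_sub_C _

lemma dffP_natDegree (n : ℕ) : (dffP 1 n).natDegree = n := by
  rw [dffP, Polynomial.natDegree_prod_of_monic _ _ fun i _ => Polynomial.monic_X_sub_C _]
  simp only [Polynomial.natDegree_X_sub_C]
  simp

lemma dff_indep : ∀ (N : ℕ) (c : ℕ → ℝ),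
    (∀ y : ℝ, ∑ l ∈ Finset.range N, c l * dff 1 y l = 0) → ∀ l < N, c l = 0 := by
  intro N
  induction N with
  | zero => intro c _ l hl; omega
  | succ N ih =>
      intro c h
      have hP0 : (∑ l ∈ Finset.range (N + 1), Polynomial.C (c l) * dffP 1 l) = 0 := by
        apply Polynomial.funext
        intro y
        rw [Polynomial.eval_finset_sum, Polynomial.eval_zero]
        rw [← h y]
        refine Finset.sum_congr rfl fun l _ => ?_
        rw [Polynomial.eval_mul, Polynomial.eval_C, dffP_eval]
      have hcN : c N = 0 := by
        have := congrArg (fun P => Polynomial.coeff P N) hP0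
        simp only [Polynomial.finset_sum_coeff, Polynomial.coeff_zero] at this
        rw [Finset.sum_range_succ] at this
        have hzero : ∀ l ∈ Finset.range N,
            (Polynomial.C (c l) * dffP 1 l).coeff N = 0 := by
          intro l hl
          rw [Finset.mem_range] at hl
          apply Polynomial.coeff_eq_zero_of_natDegree_lt
          calc (Polynomial.C (c l) * dffP 1 l).natDegree
              ≤ (Polynomial.C (c l)).natDegree + (dffP 1 l).natDegree :=
                Polynomial.natDegree_mul_le
            _ < N := by rw [Polynomial.natDegree_C, dffP_natDegree]; omega
        rw [Finset.sum_eq_zero hzero, zero_add, Polynomial.coeff_C_mul] at this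
        have hdiag : (dffP 1 N).coeff N = 1 := by
          have h2 := (dffP_monic N).coeff_natDegree
          rwa [dffP_natDegree] at h2
        rw [hdiag, mul_one] at this
        exact this
      intro l hl
      rcases Nat.lt_succ_iff_lt_or_eq.1 hl with h' | h'
      · refine ih c (fun y => ?_) l h'
        have := h y
        rw [Finset.sum_range_succ, hcN, zero_mul, add_zero] at this
        exact this
      · rw [h']; exact hcN

/-- `Σ_{k=0}^n S_{J,λ}^{(2)}(n,k) C_k^{(r)}(x)
      = Σ_{k=0}^n binom(n,k) (Σ_{l=0}^k E_{l,λ}^{(r)} S_{2,λ}(k,l)) B_{n-k,λ}(x)`. -/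
theorem stmt_12 (lam : ℝ) (hlam : lam ≠ 0) (r : ℕ) (hr : 1 ≤ r)
    (S2 : ℕ → ℕ → ℝ)
    (hS2 : ∀ (x : ℝ) (n : ℕ), dff lam x n = ∑ l ∈ Finset.range (n + 1), S2 n l * dff 1 x l)
    (E C : ℝ → ℕ → ℝ)
    (hE : ∀ x : ℝ, (degExp lam 1 + degExp lam (-1)) ^ r *
      PowerSeries.mk (fun n => E x n / n.factorial) = 2 ^ r * degExp lam x)
    (hC : ∀ x : ℝ, (onePlus 2 + 1) ^ r *
      PowerSeries.mk (fun n => C x n / n.factorial) = 2 ^ r * onePlus (x + r))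
    (SJ2 : ℕ → ℕ → ℝ)
    (hSJ2 : ∀ k : ℕ, PowerSeries.mk (fun n => SJ2 n k / n.factorial) =
      ((k.factorial : ℝ))⁻¹ • (pcomp (degExp lam 1) (degExp lam 1 - 1) - 1) ^ k)
    (B : ℝ → ℕ → ℝ)
    (hB : ∀ x : ℝ, pcomp (degExp lam x) (degExp lam 1 - 1) =
      PowerSeries.mk (fun n => B x n / n.factorial))
    (n : ℕ) (x : ℝ) :
    ∑ k ∈ Finset.range (n + 1), SJ2 n k * C x k =
      ∑ k ∈ Finset.range (n + 1), (n.choose k : ℝ) *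
        (∑ l ∈ Finset.range (k + 1), E 0 l * S2 k l) * B x (n - k) := by
  classical
  set g : PowerSeries ℝ := degExp lam 1 - 1 with hgdef
  set F : PowerSeries ℝ := pcomp (degExp lam 1) g with hFdef
  set hh : PowerSeries ℝ := F - 1 with hhdef
  set Fi : PowerSeries ℝ := pcomp (degExp lam (-1)) g with hFidef
  set P : PowerSeries ℝ := pcomp (PowerSeries.mk fun n => E 0 n / n.factorial) g with hPdef
  set Bs : PowerSeries ℝ := pcomp (degExp lam x) g with hBsdef
  set Q : PowerSeries ℝ := pcomp (PowerSeries.mk fun n => C x n / n.factorial) hh with hQdef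
  have hg0 : PowerSeries.constantCoeff g = 0 := by
    rw [hgdef, map_sub, constantCoeff_degExp, map_one, sub_self]
  have hh0 : PowerSeries.constantCoeff hh = 0 := by
    rw [hhdef, map_sub, hFdef, constantCoeff_pcomp, constantCoeff_degExp, map_one, sub_self]
  have hnfac : (n.factorial : ℝ) ≠ 0 := by positivity
  have h2c : ∀ u : PowerSeries ℝ, pcomp (2 : PowerSeries ℝ) u = 2 := by
    intro u
    rw [← map_ofNat (PowerSeries.C (R := ℝ)) 2, pcomp_C]
  -- F * Fi = 1
  have hFFi : F * Fi = 1 := by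
    rw [hFdef, hFidef, ← pcomp_mul hg0, degExp_mul lam hlam 1 (-1),
      show (1 : ℝ) + (-1) = 0 by ring, degExp_zero, pcomp_one]
  -- the Euler equation composed with g
  have hPE : (F + Fi) ^ r * P = 2 ^ r := by
    have h1 := congrArg (fun z => pcomp z g) (hE 0)
    rw [pcomp_mul hg0, pcomp_mul hg0, pcomp_pow hg0, pcomp_add, degExp_zero, pcomp_one,
      mul_one, pcomp_pow hg0, h2c] at h1
    rw [← hFdef, ← hFidef, ← hPdef] at h1
    exact h1
  -- the Changhee equation composed with hh
  have hQC : (F ^ 2 + 1) ^ r * Q = 2 ^ r * (Bs * F ^ r) := by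
    have h1 := congrArg (fun z => pcomp z hh) (hC x)
    rw [pcomp_mul hh0, pcomp_mul hh0, pcomp_pow hh0, pcomp_add, pcomp_one,
      pcomp_pow hh0, h2c] at h1
    have h2p : pcomp (onePlus 2) hh = F ^ 2 := by
      rw [show (2 : ℝ) = ((2 : ℕ) : ℝ) by norm_num, onePlus_nat, pcomp_pow hh0,
        pcomp_add, pcomp_one, pcomp_X hh0, hhdef]
      ring
    have h3 : pcomp (onePlus (x + r)) hh = Bs * F ^ r := by
      have h3' := comp_onePlus_F lam hlam (x + r)
      rw [← hgdef, ← hFdef, ← hhdef] at h3'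
      rw [h3']
      have h4 : degExp lam (x + (r : ℝ)) = degExp lam x * degExp lam 1 ^ r := by
        rw [degExp_pow lam hlam, degExp_mul lam hlam]
      rw [h4, pcomp_mul hg0, pcomp_pow hg0, ← hFdef, ← hBsdef]
    rw [h2p, h3, ← hQdef] at h1
    exact h1
  -- the key power series identity
  have hFne : F ≠ 0 := left_ne_zero_of_mul_eq_one hFFi
  have h2ne : (2 : PowerSeries ℝ) ^ r ≠ 0 := by
    apply pow_ne_zero
    intro h
    have h' := congrArg (PowerSeries.constantCoeff) h
    rw [map_ofNat, map_zero] at h'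
    norm_num at h'
  have hsplit : (F ^ 2 + 1 : PowerSeries ℝ) = F * (F + Fi) := by
    rw [mul_add, hFFi, pow_two]
  have hkey : Q = P * Bs := by
    refine mul_left_cancel₀ (mul_ne_zero (pow_ne_zero r hFne) h2ne) ?_
    calc F ^ r * 2 ^ r * Q = F ^ r * ((F + Fi) ^ r * P) * Q := by rw [hPE]
      _ = P * ((F ^ 2 + 1) ^ r * Q) := by rw [hsplit, mul_pow]; ring
      _ = P * (2 ^ r * (Bs * F ^ r)) := by rw [hQC]
      _ = F ^ r * 2 ^ r * (P * Bs) := by ring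
  -- LHS as a coefficient
  have hSJc : ∀ k : ℕ, SJ2 n k
      = n.factorial * ((k.factorial : ℝ)⁻¹ * PowerSeries.coeff n (hh ^ k)) := by
    intro k
    have h1 := congrArg (PowerSeries.coeff n) (hSJ2 k)
    rw [PowerSeries.coeff_mk, map_smul, smul_eq_mul] at h1
    rw [div_eq_iff hnfac] at h1
    rw [h1]; ring
  have hLHS : ∑ k ∈ Finset.range (n + 1), SJ2 n k * C x k
      = n.factorial * PowerSeries.coeff n Q := by
    rw [hQdef, coeff_pcomp, Finset.mul_sum]
    refine Finset.sum_congr rfl fun k _ => ?_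
    rw [PowerSeries.coeff_mk, hSJc k, div_eq_mul_inv]
    ring
  -- S2 identification
  have hS2id : ∀ k l : ℕ, l < k + 1 →
      S2 k l = k.factorial * (PowerSeries.coeff k (g ^ l) / l.factorial) := by
    intro k
    have hcomp : ∀ y : ℝ, pcomp (onePlus y) g = degExp lam y := by
      intro y
      have := comp_onePlus_degExp lam hlam y
      rwa [← hgdef] at this
    have hzero : ∀ y : ℝ, ∑ l ∈ Finset.range (k + 1),
        (S2 k l / k.factorial - PowerSeries.coeff k (g ^ l) / l.factorial) * dff 1 y l
          = 0 := by
      intro y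
      have h1 := congrArg (PowerSeries.coeff k) (hcomp y)
      rw [coeff_pcomp, coeff_degExp] at h1
      have h2 := hS2 y k
      simp only [sub_mul]
      rw [Finset.sum_sub_distrib, sub_eq_zero]
      have hL2 : ∑ l ∈ Finset.range (k + 1), S2 k l / k.factorial * dff 1 y l
          = dff lam y k / k.factorial := by
        rw [h2, Finset.sum_div]
        exact Finset.sum_congr rfl fun l _ => by ring
      have hR2 : ∑ l ∈ Finset.range (k + 1),
          PowerSeries.coeff k (g ^ l) / l.factorial * dff 1 y l
          = dff lam y k / k.factorial := by
        rw [← h1]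
        refine Finset.sum_congr rfl fun l _ => ?_
        rw [coeff_onePlus]
        ring
      rw [hL2, hR2]
    intro l hl
    have h5 := sub_eq_zero.1 (dff_indep (k + 1) _ hzero l hl)
    rw [div_eq_iff (by positivity : (k.factorial : ℝ) ≠ 0)] at h5
    rw [h5]; ring
  -- RHS as a coefficient
  have hRHS : ∑ k ∈ Finset.range (n + 1), (n.choose k : ℝ) *
        (∑ l ∈ Finset.range (k + 1), E 0 l * S2 k l) * B x (n - k)
      = n.factorial * PowerSeries.coeff n (P * Bs) := by
    rw [PowerSeries.coeff_mul, Finset.Nat.sum_antidiagonal_eq_sum_range_succ_mk,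
      Finset.mul_sum]
    refine Finset.sum_congr rfl fun k hk => ?_
    have hk' : k ≤ n := Nat.lt_succ_iff.1 (Finset.mem_range.1 hk)
    have hPk : PowerSeries.coeff k P
        = ∑ l ∈ Finset.range (k + 1), E 0 l / l.factorial * PowerSeries.coeff k (g ^ l) := by
      rw [hPdef, coeff_pcomp]
      exact Finset.sum_congr rfl fun l _ => by rw [PowerSeries.coeff_mk]
    have hEsum : ∑ l ∈ Finset.range (k + 1), E 0 l * S2 k l
        = k.factorial * PowerSeries.coeff k P := by
      rw [hPk, Finset.mul_sum]
      refine Finset.sum_congr rfl fun l hl => ?_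
      rw [hS2id k l (Finset.mem_range.1 hl)]
      ring
    have hBk : B x (n - k) = (n - k).factorial * PowerSeries.coeff (n - k) Bs := by
      have h1 := congrArg (PowerSeries.coeff (n - k)) (hB x)
      rw [PowerSeries.coeff_mk, ← hBsdef] at h1
      rw [h1]
      field_simp
    have hfac : (n.choose k : ℝ) * k.factorial * (n - k).factorial = n.factorial := by
      rw [← Nat.choose_mul_factorial_mul_factorial hk']
      push_cast
      ring
    rw [hEsum, hBk, ← hfac]
    ring
  calc ∑ k ∈ Finset.range (n + 1), SJ2 n k * C x k
      = n.factorial * PowerSeries.coeff n Q := hLHS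
    _ = n.factorial * PowerSeries.coeff n (P * Bs) := by rw [hkey]
    _ = _ := hRHS.symm
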